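/- For the generalized Braess construction with γ2 ∈ (0,1], the flow f^nf = (γ2/4, 1−γ2/8, 1−γ2/8, 0) is an untolled Nash flow: paths p1, p2, p3 all have equal latency 2+γ2/4, and path p4 has latency 2+γ2 ≥ 2+γ2/4. -/

import Mathlib

/-- Generalized Braess construction, γ2 ∈ (0,1]: the flow
f^nf = (γ2/4, 1−γ2/8, 1−γ2/8, 0) is an untolled Nash flow: paths p1,p2,p3 all
have latency 2+γ2/4, path p4 has latency 2+γ2 ≥ 2+γ2/4. -/
theorem stmt4
    (γ2 : ℝ) (hγ2 : 0 < γ2 ∧ γ2 ≤ 1)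
    (L : (Fin 4 → ℝ) → Fin 4 → ℝ)
    (hL : ∀ g, L g = ![ (g 0 + g 1) + (g 0 + g 2),
                        (g 0 + g 1) + (1 + γ2 / 8),
                        (1 + γ2 / 8) + (g 0 + g 2),
                        2 + γ2 ])
    (fnf : Fin 4 → ℝ)
    (hnf : fnf = ![γ2 / 4, 1 - γ2 / 8, 1 - γ2 / 8, 0]) :
    (L fnf 0 = 2 + γ2 / 4) ∧ (L fnf 1 = 2 + γ2 / 4) ∧ (L fnf 2 = 2 + γ2 / 4) ∧
    (L fnf 3 = 2 + γ2) ∧ (2 + γ2 / 4 ≤ 2 + γ2) ∧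
    (∀ p, 0 < fnf p → ∀ q, L fnf p ≤ L fnf q) := by
  obtain ⟨h0, h1⟩ := hγ2
  subst hnf
  rw [hL]
  refine ⟨by norm_num [Matrix.cons_val_two, Matrix.cons_val_three, Matrix.vecHead, Matrix.vecTail]; ring, by norm_num [Matrix.cons_val_two, Matrix.cons_val_three, Matrix.vecHead, Matrix.vecTail]; ring, by norm_num [Matrix.cons_val_two, Matrix.cons_val_three, Matrix.vecHead, Matrix.vecTail]; ring, by norm_num [Matrix.cons_val_two, Matrix.cons_val_three, Matrix.vecHead, Matrix.vecTail], by linarith, ?_⟩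
  intro p hp q
  fin_cases p <;> fin_cases q <;> simp_all <;> nlinarith
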